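/- Let F̄ : ℝ → (0, 1] be nonincreasing with F̄(x) = 1 for all x ≤ 0, and suppose F̄ is log-concave on [0, ∞). Fix an integer r ≥ 1 and real numbers 0 = t_1 ≤ t_2 ≤ … ≤ t_r, and set t_{r+1} = ∞. Define the expected computing cost E[C] = Σ_{u=1}^{r} u · ∫_{t_u}^{t_{u+1}} Π_{i=1}^{u} F̄(s − t_i) ds. Then ∫_0^∞ F̄(x) dx ≤ E[C] ≤ r · ∫_0^∞ F̄(x)^r dx. -/

import Mathlib

open MeasureTheory
open scoped ENNReal

/-- `f` is log-concave on `D`: `f(θx + (1−θ)y) ≥ f(x)^θ f(y)^{1−θ}`. -/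
def LogConcaveOn (D : Set ℝ) (f : ℝ → ℝ) : Prop :=
  ∀ ⦃x⦄, x ∈ D → ∀ ⦃y⦄, y ∈ D → ∀ ⦃θ : ℝ⦄, θ ∈ Set.Icc (0 : ℝ) 1 →
    f x ^ θ * f y ^ (1 - θ) ≤ f (θ * x + (1 - θ) * y)

section AuxCost
variable {F : ℝ → ℝ}


lemma aux_nbu (hrange : ∀ x, F x ∈ Set.Ioc (0:ℝ) 1) (hneg : ∀ x ≤ (0:ℝ), F x = 1)
    (hlc : LogConcaveOn (Set.Ici 0) F) {a b : ℝ} (ha : 0 ≤ a) (hb : 0 ≤ b) :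
    F (a + b) ≤ F a * F b := by
  rcases eq_or_lt_of_le (add_nonneg ha hb) with h | h
  · have ha0 : a = 0 := by linarith
    have hb0 : b = 0 := by linarith
    simp [ha0, hb0, hneg 0 le_rfl]
  · set θ : ℝ := a / (a + b) with hθdef
    have hθ : θ ∈ Set.Icc (0:ℝ) 1 := ⟨div_nonneg ha h.le, by rw [div_le_one h]; linarith⟩
    have hab : (a + b) ∈ Set.Ici (0:ℝ) := h.le
    have h0 : (0:ℝ) ∈ Set.Ici (0:ℝ) := Set.self_mem_Ici
    have h1 := hlc hab h0 hθ
    have h2 := hlc hab h0 ⟨div_nonneg hb h.le, by rw [div_le_one h]; linarith⟩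
    have e1 : θ * (a + b) + (1 - θ) * 0 = a := by rw [hθdef]; field_simp; ring
    have e2 : (b / (a + b)) * (a + b) + (1 - b / (a + b)) * 0 = b := by field_simp; ring
    rw [e1, hneg 0 le_rfl, Real.one_rpow, mul_one] at h1
    rw [e2, hneg 0 le_rfl, Real.one_rpow, mul_one] at h2
    have hFab : 0 < F (a + b) := (hrange _).1
    have key : F (a + b) ^ θ * F (a + b) ^ (b / (a + b)) = F (a + b) := by
      rw [← Real.rpow_add hFab]
      have : θ + b / (a + b) = 1 := by rw [hθdef]; field_simp
      rw [this, Real.rpow_one]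
    calc F (a + b) = F (a + b) ^ θ * F (a + b) ^ (b / (a + b)) := key.symm
      _ ≤ F a * F b := mul_le_mul h1 h2 (Real.rpow_nonneg hFab.le _) (hrange a).1.le

lemma aux_superadd (hrange : ∀ x, F x ∈ Set.Ioc (0:ℝ) 1) (hneg : ∀ x ≤ (0:ℝ), F x = 1)
    (hlc : LogConcaveOn (Set.Ici 0) F) {ι : Type*} (A : Finset ι) (a : ι → ℝ)
    (ha : ∀ i ∈ A, 0 ≤ a i) :
    F (∑ i ∈ A, a i) ≤ ∏ i ∈ A, F (a i) := by
  induction A using Finset.cons_induction with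
  | empty => simp [hneg 0 le_rfl]
  | cons j A hj ih =>
    rw [Finset.sum_cons, Finset.prod_cons]
    have hsum : 0 ≤ ∑ i ∈ A, a i :=
      Finset.sum_nonneg fun i hi => ha i (Finset.mem_cons_of_mem hi)
    calc F (a j + ∑ i ∈ A, a i) ≤ F (a j) * F (∑ i ∈ A, a i) :=
          aux_nbu hrange hneg hlc (ha j (Finset.mem_cons_self _ _)) hsum
      _ ≤ F (a j) * ∏ i ∈ A, F (a i) := by
          exact mul_le_mul_of_nonneg_left
            (ih fun i hi => ha i (Finset.mem_cons_of_mem hi)) (hrange (a j)).1.le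

lemma aux_logconcave (hrange : ∀ x, F x ∈ Set.Ioc (0:ℝ) 1)
    (hlc : LogConcaveOn (Set.Ici 0) F) :
    ConcaveOn ℝ (Set.Ici 0) (fun x => Real.log (F x)) := by
  refine ⟨convex_Ici 0, ?_⟩
  intro x hx y hy p q hp hq hpq
  have hq' : q = 1 - p := by linarith
  have h := hlc hx hy (θ := p) ⟨hp, by linarith⟩
  have hx0 : 0 < F x := (hrange x).1
  have hy0 : 0 < F y := (hrange y).1
  have hl : 0 < F x ^ p * F y ^ (1 - p) :=
    mul_pos (Real.rpow_pos_of_pos hx0 _) (Real.rpow_pos_of_pos hy0 _)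
  have := Real.log_le_log hl h
  rw [Real.log_mul (Real.rpow_pos_of_pos hx0 _).ne' (Real.rpow_pos_of_pos hy0 _).ne',
    Real.log_rpow hx0, Real.log_rpow hy0] at this
  simpa [hq', smul_eq_mul] using this

lemma aux_gmean (hrange : ∀ x, F x ∈ Set.Ioc (0:ℝ) 1)
    (hlc : LogConcaveOn (Set.Ici 0) F) {ι : Type*} (A : Finset ι) (hA : A.Nonempty)
    (a : ι → ℝ) (ha : ∀ i ∈ A, 0 ≤ a i) :
    ∏ i ∈ A, F (a i) ≤ F ((∑ i ∈ A, a i) / A.card) ^ (A.card) := by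
  have hcard : (0:ℝ) < A.card := by exact_mod_cast Finset.card_pos.2 hA
  have hjen := (aux_logconcave hrange hlc).le_map_sum (t := A)
    (w := fun _ => (A.card : ℝ)⁻¹) (p := a)
    (fun i _ => by positivity)
    (by rw [Finset.sum_const, nsmul_eq_mul, mul_inv_cancel₀ hcard.ne'])
    (fun i hi => ha i hi)
  -- hjen : ∑ i ∈ A, (card)⁻¹ • log (F (a i)) ≤ log (F (∑ i ∈ A, (card)⁻¹ • a i))
  have hsm : ∑ i ∈ A, (A.card : ℝ)⁻¹ • a i = (∑ i ∈ A, a i) / A.card := by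
    rw [← Finset.smul_sum, smul_eq_mul, div_eq_inv_mul]
  rw [hsm] at hjen
  have hlog : ∑ i ∈ A, Real.log (F (a i)) ≤ (A.card : ℝ) * Real.log (F ((∑ i ∈ A, a i) / A.card)) := by
    have := mul_le_mul_of_nonneg_left hjen hcard.le
    rw [Finset.mul_sum] at this
    calc ∑ i ∈ A, Real.log (F (a i))
        = ∑ i ∈ A, (A.card : ℝ) * ((A.card : ℝ)⁻¹ • Real.log (F (a i))) := by
          refine Finset.sum_congr rfl fun i _ => ?_
          rw [smul_eq_mul, ← mul_assoc, mul_inv_cancel₀ hcard.ne', one_mul]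
      _ ≤ (A.card : ℝ) * Real.log (F ((∑ i ∈ A, a i) / A.card)) := this
  have hprodpos : 0 < ∏ i ∈ A, F (a i) :=
    Finset.prod_pos fun i _ => (hrange (a i)).1
  have hpowpos : 0 < F ((∑ i ∈ A, a i) / A.card) ^ A.card :=
    pow_pos (hrange _).1 _
  rw [← Real.log_le_log_iff hprodpos hpowpos]
  rw [Real.log_prod fun i _ => (hrange (a i)).1.ne', Real.log_pow]
  exact_mod_cast hlog



lemma lint_affine {f : ℝ → ℝ≥0∞} (hf : Measurable f) {k : ℝ} (hk : 0 < k) (d : ℝ)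
    {s : Set ℝ} (hs : MeasurableSet s) :
    ∫⁻ x in (fun y => k * y + d) ⁻¹' s, f (k * x + d) = ENNReal.ofReal k⁻¹ * ∫⁻ x in s, f x := by
  have hT : Measurable fun y : ℝ => k * y + d := (measurable_const_mul k).add_const d
  have hmap : Measure.map (fun y : ℝ => k * y + d) volume = ENNReal.ofReal k⁻¹ • volume := by
    have hco : (fun y : ℝ => k * y + d) = (fun z : ℝ => z + d) ∘ (fun y : ℝ => k * y) := rfl
    rw [hco, ← Measure.map_map (measurable_add_const d) (measurable_const_mul k)]
    have h1 : Measure.map (fun y : ℝ => k * y) volume = ENNReal.ofReal |k⁻¹| • volume :=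
      Real.map_volume_mul_left hk.ne'
    rw [h1, Measure.map_smul, map_add_right_eq_self volume d, abs_of_pos (inv_pos.2 hk)]
  have := setLIntegral_map (μ := volume) hs hf hT
  rw [hmap] at this
  rw [← this, Measure.restrict_smul, lintegral_smul_measure, smul_eq_mul]

lemma lint_affine_Ioc {f : ℝ → ℝ≥0∞} (hf : Measurable f) {k : ℝ} (hk : 0 < k) (d a b : ℝ) :
    ∫⁻ s in Set.Ioc a b, f (k * s + d)
      = ENNReal.ofReal k⁻¹ * ∫⁻ x in Set.Ioc (k * a + d) (k * b + d), f x := by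
  have hpre : (fun y : ℝ => k * y + d) ⁻¹' Set.Ioc (k * a + d) (k * b + d) = Set.Ioc a b := by
    ext y
    simp only [Set.mem_preimage, Set.mem_Ioc]
    constructor
    · rintro ⟨h1, h2⟩
      constructor <;> nlinarith
    · rintro ⟨h1, h2⟩
      constructor <;> nlinarith
  rw [← hpre, lint_affine hf hk d measurableSet_Ioc]

lemma lint_affine_Ioi {f : ℝ → ℝ≥0∞} (hf : Measurable f) {k : ℝ} (hk : 0 < k) (d a : ℝ) :
    ∫⁻ s in Set.Ioi a, f (k * s + d)
      = ENNReal.ofReal k⁻¹ * ∫⁻ x in Set.Ioi (k * a + d), f x := by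
  have hpre : (fun y : ℝ => k * y + d) ⁻¹' Set.Ioi (k * a + d) = Set.Ioi a := by
    ext y
    simp only [Set.mem_preimage, Set.mem_Ioi]
    constructor
    · intro h1
      nlinarith
    · intro h1
      nlinarith
  rw [← hpre, lint_affine hf hk d measurableSet_Ioi]

lemma lint_tile (g : ℝ → ℝ≥0∞) (c : ℕ → ℝ) (m r : ℕ) (hmr : m ≤ r)
    (hc : ∀ u, m ≤ u → u < r → c u ≤ c (u + 1)) :
    (∑ u ∈ Finset.Ico m r, ∫⁻ x in Set.Ioc (c u) (c (u + 1)), g x)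
      + ∫⁻ x in Set.Ioi (c r), g x = ∫⁻ x in Set.Ioi (c m), g x := by
  induction r, hmr using Nat.le_induction with
  | base => simp
  | succ n hn ih =>
    have hcn : c n ≤ c (n + 1) := hc n hn (Nat.lt_succ_self n)
    have hglue : (∫⁻ x in Set.Ioc (c n) (c (n + 1)), g x) + ∫⁻ x in Set.Ioi (c (n + 1)), g x
        = ∫⁻ x in Set.Ioi (c n), g x := by
      rw [← lintegral_union measurableSet_Ioi
        (by rw [Set.disjoint_left]; intro x hx hx'; exact absurd (Set.mem_Ioi.1 hx') (not_lt.2 (Set.mem_Ioc.1 hx).2)),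
        Set.Ioc_union_Ioi_eq_Ioi hcn]
    rw [Finset.sum_Ico_succ_top hn, add_assoc, hglue]
    exact ih fun u hu hur => hc u hu (hur.trans (Nat.lt_succ_self n))

end AuxCost

/-- For a log-concave tail distribution `F̄ : ℝ → (0,1]` (with `F̄ ≡ 1` on `(-∞,0]`),
the expected computing cost
`E[C] = Σ_{u=1}^{r} u ∫_{t_u}^{t_{u+1}} Π_{i=1}^{u} F̄(s − t_i) ds` (with `t_{r+1} = ∞`)
satisfies `E[X] ≤ E[C] ≤ r E[X_{1:r}]`, i.e.
`∫_0^∞ F̄(x) dx ≤ E[C] ≤ r ∫_0^∞ F̄(x)^r dx`. -/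
theorem cost_bounds_logconcave (F : ℝ → ℝ)
    (hrange : ∀ x, F x ∈ Set.Ioc (0 : ℝ) 1)
    (hmono : Antitone F) (hneg : ∀ x ≤ (0 : ℝ), F x = 1)
    (hlc : LogConcaveOn (Set.Ici 0) F)
    (r : ℕ) (hr : 1 ≤ r) (t : ℕ → ℝ) (ht1 : t 1 = 0)
    (htmono : ∀ u v, 1 ≤ u → u ≤ v → v ≤ r → t u ≤ t v) :
    ∫⁻ x in Set.Ioi (0 : ℝ), ENNReal.ofReal (F x)
      ≤ (∑ u ∈ Finset.Ico 1 r, (u : ℝ≥0∞) *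
            ∫⁻ s in Set.Ioc (t u) (t (u + 1)),
              ENNReal.ofReal (∏ i ∈ Finset.Icc 1 u, F (s - t i))) +
        (r : ℝ≥0∞) *
          ∫⁻ s in Set.Ioi (t r),
            ENNReal.ofReal (∏ i ∈ Finset.Icc 1 r, F (s - t i)) ∧
    (∑ u ∈ Finset.Ico 1 r, (u : ℝ≥0∞) *
          ∫⁻ s in Set.Ioc (t u) (t (u + 1)),
            ENNReal.ofReal (∏ i ∈ Finset.Icc 1 u, F (s - t i))) +
      (r : ℝ≥0∞) *
        ∫⁻ s in Set.Ioi (t r),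
          ENNReal.ofReal (∏ i ∈ Finset.Icc 1 r, F (s - t i))
      ≤ (r : ℝ≥0∞) * ∫⁻ x in Set.Ioi (0 : ℝ), ENNReal.ofReal (F x ^ r) := by
  classical
  have hFmeas : Measurable F := hmono.measurable
  have hF0 : F 0 = 1 := hneg 0 le_rfl
  have hr0 : (0:ℝ) < r := by exact_mod_cast hr
  set T : ℕ → ℝ := fun u => ∑ i ∈ Finset.Icc 1 u, t i with hTdef
  set c : ℕ → ℝ := fun u => u * t u - T u with hcdef
  have hT1 : T 1 = 0 := by simp [hTdef, ht1]
  have hc1 : c 1 = 0 := by simp [hcdef, hT1, ht1]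
  have hTsucc : ∀ u : ℕ, T (u + 1) = T u + t (u + 1) := fun u =>
    Finset.sum_Icc_succ_top (Nat.succ_le_succ u.zero_le) t
  have hcsucc : ∀ u : ℕ, 1 ≤ u → c (u + 1) = u * t (u + 1) - T u := by
    intro u hu
    simp only [hcdef, hTsucc u]
    push_cast
    ring
  have hcmono : ∀ u, 1 ≤ u → u < r → c u ≤ c (u + 1) := by
    intro u hu hur
    have ht := htmono u (u + 1) hu (Nat.le_succ u) hur
    have hu0 : (0:ℝ) ≤ u := Nat.cast_nonneg u
    rw [hcsucc u hu]
    simp only [hcdef]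
    nlinarith
  have hcardIcc : ∀ u : ℕ, (Finset.Icc 1 u).card = u := by
    intro u; rw [Nat.card_Icc]; omega
  have hsum : ∀ (u : ℕ) (s : ℝ), ∑ i ∈ Finset.Icc 1 u, (s - t i) = u * s - T u := by
    intro u s
    rw [Finset.sum_sub_distrib, Finset.sum_const, hcardIcc u, nsmul_eq_mul]
  have htineq : ∀ (u : ℕ), u ≤ r → ∀ i ∈ Finset.Icc 1 u, ∀ s : ℝ, t u < s → 0 ≤ s - t i := by
    intro u hur i hi s hs
    obtain ⟨hi1, hi2⟩ := Finset.mem_Icc.mp hi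
    have := htmono i u hi1 hi2 hur
    linarith
  -- measurability
  have hg1 : Measurable fun x : ℝ => ENNReal.ofReal (F x) := hFmeas.ennreal_ofReal
  have hg2 : Measurable fun x : ℝ => ENNReal.ofReal (F x ^ r) :=
    (hFmeas.pow_const r).ennreal_ofReal
  have hgprod : ∀ u : ℕ, Measurable fun s : ℝ =>
      ENNReal.ofReal (∏ i ∈ Finset.Icc 1 u, F (s - t i)) := by
    intro u
    exact (Finset.measurable_prod _ fun i _ =>
      hFmeas.comp (measurable_id.sub measurable_const)).ennreal_ofReal
  -- cast identities
  have hcast1 : ∀ u : ℕ, 1 ≤ u → (u : ℝ≥0∞) * ENNReal.ofReal ((u : ℝ))⁻¹ = 1 := by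
    intro u hu
    have hu0 : (0:ℝ) < u := by exact_mod_cast hu
    rw [← ENNReal.ofReal_natCast, ← ENNReal.ofReal_mul hu0.le, mul_inv_cancel₀ hu0.ne',
      ENNReal.ofReal_one]
  have hcast2 : ∀ u : ℕ, 1 ≤ u → (u : ℝ≥0∞) * ENNReal.ofReal (((u : ℝ) / r))⁻¹ = (r : ℝ≥0∞) := by
    intro u hu
    have hu0 : (0:ℝ) < u := by exact_mod_cast hu
    have he : (u:ℝ) * ((r:ℝ) / (u:ℝ)) = (r:ℝ) := by field_simp
    rw [← ENNReal.ofReal_natCast u, ← ENNReal.ofReal_mul hu0.le, inv_div, he,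
      ENNReal.ofReal_natCast]
  ------------------------------------------------------------------
  -- LOWER BOUND, per interval
  have lower_u : ∀ u, 1 ≤ u → u < r →
      ∫⁻ x in Set.Ioc (c u) (c (u + 1)), ENNReal.ofReal (F x)
        ≤ (u : ℝ≥0∞) * ∫⁻ s in Set.Ioc (t u) (t (u + 1)),
            ENNReal.ofReal (∏ i ∈ Finset.Icc 1 u, F (s - t i)) := by
    intro u hu hur
    have hk : (0:ℝ) < u := by exact_mod_cast hu
    have hsub := lint_affine_Ioc (f := fun x => ENNReal.ofReal (F x)) hg1 hk (-T u)
      (t u) (t (u + 1))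
    have he1 : (u:ℝ) * t u + -T u = c u := by simp only [hcdef]; ring
    have he2 : (u:ℝ) * t (u + 1) + -T u = c (u + 1) := by rw [hcsucc u hu]; ring
    rw [he1, he2] at hsub
    have key : ∫⁻ x in Set.Ioc (c u) (c (u + 1)), ENNReal.ofReal (F x)
        = (u : ℝ≥0∞) * ∫⁻ s in Set.Ioc (t u) (t (u + 1)),
            ENNReal.ofReal (F ((u:ℝ) * s + -T u)) := by
      rw [hsub, ← mul_assoc, hcast1 u hu, one_mul]
    rw [key]
    refine mul_le_mul_right (setLIntegral_mono (hgprod u) ?_) _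
    intro s hs
    obtain ⟨hs1, hs2⟩ := Set.mem_Ioc.mp hs
    refine ENNReal.ofReal_le_ofReal ?_
    have hsup := aux_superadd hrange hneg hlc (Finset.Icc 1 u) (fun i => s - t i)
      (fun i hi => htineq u hur.le i hi s hs1)
    rw [hsum u s] at hsup
    rw [← sub_eq_add_neg]
    exact hsup
  have lower_r : ∫⁻ x in Set.Ioi (c r), ENNReal.ofReal (F x)
      ≤ (r : ℝ≥0∞) * ∫⁻ s in Set.Ioi (t r),
          ENNReal.ofReal (∏ i ∈ Finset.Icc 1 r, F (s - t i)) := by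
    have hsub := lint_affine_Ioi (f := fun x => ENNReal.ofReal (F x)) hg1 hr0 (-T r) (t r)
    have he1 : (r:ℝ) * t r + -T r = c r := by simp only [hcdef]; ring
    rw [he1] at hsub
    have key : ∫⁻ x in Set.Ioi (c r), ENNReal.ofReal (F x)
        = (r : ℝ≥0∞) * ∫⁻ s in Set.Ioi (t r), ENNReal.ofReal (F ((r:ℝ) * s + -T r)) := by
      rw [hsub, ← mul_assoc, hcast1 r hr, one_mul]
    rw [key]
    refine mul_le_mul_right (setLIntegral_mono (hgprod r) ?_) _
    intro s hs
    refine ENNReal.ofReal_le_ofReal ?_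
    have hsup := aux_superadd hrange hneg hlc (Finset.Icc 1 r) (fun i => s - t i)
      (fun i hi => htineq r le_rfl i hi s (Set.mem_Ioi.mp hs))
    rw [hsum r s] at hsup
    rw [← sub_eq_add_neg]
    exact hsup
  ------------------------------------------------------------------
  -- UPPER BOUND, pointwise
  have pointwise_upper : ∀ (u : ℕ), 1 ≤ u → u ≤ r → ∀ s : ℝ, t u < s →
      ∏ i ∈ Finset.Icc 1 u, F (s - t i) ≤ F (((u:ℝ) * s - T u) / r) ^ r := by
    intro u hu hur s hs
    set a : ℕ → ℝ := fun i => if i ≤ u then s - t i else 0 with hadef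
    have hfilter : (Finset.Icc 1 r).filter (fun i => i ≤ u) = Finset.Icc 1 u := by
      ext i
      simp only [Finset.mem_filter, Finset.mem_Icc]
      omega
    have hanonneg : ∀ i ∈ Finset.Icc 1 r, 0 ≤ a i := by
      intro i hi
      simp only [hadef]
      split_ifs with h
      · obtain ⟨hi1, _⟩ := Finset.mem_Icc.mp hi
        exact htineq u hur i (Finset.mem_Icc.mpr ⟨hi1, h⟩) s hs
      · exact le_rfl
    have hAne : (Finset.Icc 1 r).Nonempty := ⟨1, Finset.mem_Icc.mpr ⟨le_rfl, hr⟩⟩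
    have hgm := aux_gmean hrange hlc (Finset.Icc 1 r) hAne a hanonneg
    have hsuma : ∑ i ∈ Finset.Icc 1 r, a i = (u:ℝ) * s - T u := by
      simp only [hadef]
      rw [← Finset.sum_filter, hfilter, hsum u s]
    have hproda : ∏ i ∈ Finset.Icc 1 r, F (a i) = ∏ i ∈ Finset.Icc 1 u, F (s - t i) := by
      have : ∀ i ∈ Finset.Icc 1 r, F (a i) = if i ≤ u then F (s - t i) else 1 := by
        intro i _
        simp only [hadef]
        split_ifs with h
        · rfl
        · exact hF0
      rw [Finset.prod_congr rfl this, ← Finset.prod_filter, hfilter]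
    rw [hsuma, hproda, hcardIcc r] at hgm
    exact hgm
  -- UPPER BOUND, per interval
  have upper_u : ∀ u, 1 ≤ u → u < r →
      (u : ℝ≥0∞) * ∫⁻ s in Set.Ioc (t u) (t (u + 1)),
          ENNReal.ofReal (∏ i ∈ Finset.Icc 1 u, F (s - t i))
        ≤ (r : ℝ≥0∞) * ∫⁻ x in Set.Ioc (c u / r) (c (u + 1) / r),
            ENNReal.ofReal (F x ^ r) := by
    intro u hu hur
    have hk : (0:ℝ) < (u:ℝ) / r := by positivity
    have hsub := lint_affine_Ioc (f := fun x => ENNReal.ofReal (F x ^ r)) hg2 hk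
      (-(T u) / r) (t u) (t (u + 1))
    have he1 : (u:ℝ) / r * t u + -(T u) / r = c u / r := by simp only [hcdef]; ring
    have he2 : (u:ℝ) / r * t (u + 1) + -(T u) / r = c (u + 1) / r := by
      rw [hcsucc u hu]; ring
    rw [he1, he2] at hsub
    have step1 : (u : ℝ≥0∞) * ∫⁻ s in Set.Ioc (t u) (t (u + 1)),
        ENNReal.ofReal (∏ i ∈ Finset.Icc 1 u, F (s - t i))
        ≤ (u : ℝ≥0∞) * ∫⁻ s in Set.Ioc (t u) (t (u + 1)),
            ENNReal.ofReal (F ((u:ℝ) / r * s + -(T u) / r) ^ r) := by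
      refine mul_le_mul_right (setLIntegral_mono ?_ ?_) _
      · exact hg2.comp ((measurable_const_mul _).add_const _)
      · intro s hs
        obtain ⟨hs1, hs2⟩ := Set.mem_Ioc.mp hs
        refine ENNReal.ofReal_le_ofReal ?_
        have := pointwise_upper u hu hur.le s hs1
        have harg : ((u:ℝ) * s - T u) / r = (u:ℝ) / r * s + -(T u) / r := by ring
        rwa [harg] at this
    calc (u : ℝ≥0∞) * ∫⁻ s in Set.Ioc (t u) (t (u + 1)),
          ENNReal.ofReal (∏ i ∈ Finset.Icc 1 u, F (s - t i))
        ≤ (u : ℝ≥0∞) * ∫⁻ s in Set.Ioc (t u) (t (u + 1)),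
            ENNReal.ofReal (F ((u:ℝ) / r * s + -(T u) / r) ^ r) := step1
      _ = (r : ℝ≥0∞) * ∫⁻ x in Set.Ioc (c u / r) (c (u + 1) / r),
            ENNReal.ofReal (F x ^ r) := by
          rw [hsub, ← mul_assoc, hcast2 u hu]
  have upper_r :
      (r : ℝ≥0∞) * ∫⁻ s in Set.Ioi (t r),
          ENNReal.ofReal (∏ i ∈ Finset.Icc 1 r, F (s - t i))
        ≤ (r : ℝ≥0∞) * ∫⁻ x in Set.Ioi (c r / r), ENNReal.ofReal (F x ^ r) := by
    have hk : (0:ℝ) < (r:ℝ) / r := by positivity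
    have hsub := lint_affine_Ioi (f := fun x => ENNReal.ofReal (F x ^ r)) hg2 hk
      (-(T r) / r) (t r)
    have he1 : (r:ℝ) / r * t r + -(T r) / r = c r / r := by simp only [hcdef]; ring
    rw [he1] at hsub
    have step1 : (r : ℝ≥0∞) * ∫⁻ s in Set.Ioi (t r),
        ENNReal.ofReal (∏ i ∈ Finset.Icc 1 r, F (s - t i))
        ≤ (r : ℝ≥0∞) * ∫⁻ s in Set.Ioi (t r),
            ENNReal.ofReal (F ((r:ℝ) / r * s + -(T r) / r) ^ r) := by
      refine mul_le_mul_right (setLIntegral_mono ?_ ?_) _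
      · exact hg2.comp ((measurable_const_mul _).add_const _)
      · intro s hs
        refine ENNReal.ofReal_le_ofReal ?_
        have := pointwise_upper r hr le_rfl s (Set.mem_Ioi.mp hs)
        have harg : ((r:ℝ) * s - T r) / r = (r:ℝ) / r * s + -(T r) / r := by ring
        rwa [harg] at this
    calc (r : ℝ≥0∞) * ∫⁻ s in Set.Ioi (t r),
          ENNReal.ofReal (∏ i ∈ Finset.Icc 1 r, F (s - t i))
        ≤ (r : ℝ≥0∞) * ∫⁻ s in Set.Ioi (t r),
            ENNReal.ofReal (F ((r:ℝ) / r * s + -(T r) / r) ^ r) := step1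
      _ = (r : ℝ≥0∞) * ∫⁻ x in Set.Ioi (c r / r), ENNReal.ofReal (F x ^ r) := by
          rw [hsub, ← mul_assoc, hcast2 r hr]
  ------------------------------------------------------------------
  constructor
  · -- lower bound
    have htile := lint_tile (fun x => ENNReal.ofReal (F x)) c 1 r hr hcmono
    rw [hc1] at htile
    rw [← htile]
    refine add_le_add (Finset.sum_le_sum ?_) lower_r
    intro u hu
    obtain ⟨hu1, hu2⟩ := Finset.mem_Ico.mp hu
    exact lower_u u hu1 hu2
  · -- upper bound
    have hcmono' : ∀ u, 1 ≤ u → u < r → c u / r ≤ c (u + 1) / r := by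
      intro u hu hur
      have := hcmono u hu hur
      gcongr
    have htile := lint_tile (fun x => ENNReal.ofReal (F x ^ r)) (fun u => c u / r) 1 r hr hcmono'
    simp only [hc1, zero_div] at htile
    calc (∑ u ∈ Finset.Ico 1 r, (u : ℝ≥0∞) *
            ∫⁻ s in Set.Ioc (t u) (t (u + 1)),
              ENNReal.ofReal (∏ i ∈ Finset.Icc 1 u, F (s - t i))) +
          (r : ℝ≥0∞) * ∫⁻ s in Set.Ioi (t r),
            ENNReal.ofReal (∏ i ∈ Finset.Icc 1 r, F (s - t i))
        ≤ (∑ u ∈ Finset.Ico 1 r, (r : ℝ≥0∞) *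
              ∫⁻ x in Set.Ioc (c u / r) (c (u + 1) / r), ENNReal.ofReal (F x ^ r)) +
            (r : ℝ≥0∞) * ∫⁻ x in Set.Ioi (c r / r), ENNReal.ofReal (F x ^ r) := by
          refine add_le_add (Finset.sum_le_sum ?_) upper_r
          intro u hu
          obtain ⟨hu1, hu2⟩ := Finset.mem_Ico.mp hu
          exact upper_u u hu1 hu2
      _ = (r : ℝ≥0∞) * ((∑ u ∈ Finset.Ico 1 r,
              ∫⁻ x in Set.Ioc (c u / r) (c (u + 1) / r), ENNReal.ofReal (F x ^ r)) +
            ∫⁻ x in Set.Ioi (c r / r), ENNReal.ofReal (F x ^ r)) := by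
          rw [mul_add, Finset.mul_sum]
      _ = (r : ℝ≥0∞) * ∫⁻ x in Set.Ioi (0:ℝ), ENNReal.ofReal (F x ^ r) := by
          rw [htile]
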